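/- arXiv:0903.1722 — 2 statements merged into one kernel-verified Lean document; each statement's English description precedes it below -/
import Mathlib

section
/- Let n ∈ ℕ, let t1, t2, t3, z ∈ ℂ, and set t4 = 1 − n − t3. Assume t1+t2, t1+t3, and t1+1−n−t3 all lie outside {0, −1, …, −(n−1)}. Then (−1)^n · W_n(z; t1, t2, t3, 1−n−t3) = (t1+t2)_n · (t3+z)_n · (t3−z)_n = (t1+t2)_n · ∏_{k=1}^{n} [(t3+k−1)² − z²]. Equivalently, in the variable x = −z², the monic Wilson polynomial (−1)^n W_n/(t1+t2)_n equals ∏_{k=1}^{n} [x + (t3+k−1)²], so its zeros are x = −(t3+k−1)² for k = 1, …, n. -/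
open Finset

/-- Pochhammer symbol `(a)_k = a (a+1) ⋯ (a+k-1)`. -/
noncomputable def poch (a : ℂ) (k : ℕ) : ℂ := ∏ i ∈ Finset.range k, (a + i)

/-- The Wilson polynomial `W_n(z; t1,t2,t3,t4)` in the variable `z` (with `x = -z²`). -/
noncomputable def wilson (n : ℕ) (z t1 t2 t3 t4 : ℂ) : ℂ :=
  poch (t1 + t2) n * poch (t1 + t3) n * poch (t1 + t4) n *
    ∑ k ∈ Finset.range (n + 1),
      (poch (-(n : ℂ)) k * poch (t1 + t2 + t3 + t4 + (n : ℂ) - 1) k *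
        poch (t1 + z) k * poch (t1 - z) k) /
      ((k.factorial : ℂ) * poch (t1 + t2) k * poch (t1 + t3) k * poch (t1 + t4) k)

lemma poch_zero (a : ℂ) : poch a 0 = 1 := by simp [poch]

lemma poch_succ (a : ℂ) (k : ℕ) : poch a (k + 1) = poch a k * (a + k) := by
  simp [poch, Finset.prod_range_succ]

lemma poch_add (a : ℂ) (m n : ℕ) : poch a (m + n) = poch a m * poch (a + m) n := by
  unfold poch
  rw [Finset.prod_range_add]
  congr 1
  refine Finset.prod_congr rfl fun i _ => ?_
  push_cast
  ring

lemma poch_ne_zero {a : ℂ} {n : ℕ} (h : ∀ k : ℕ, k < n → a + k ≠ 0) : poch a n ≠ 0 := by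
  unfold poch
  exact Finset.prod_ne_zero_iff.mpr fun i hi => h i (Finset.mem_range.mp hi)

lemma poch_reflect (m : ℕ) (x : ℂ) : poch (1 - (m : ℂ) - x) m = (-1) ^ m * poch x m := by
  unfold poch
  have key : ∀ i ∈ Finset.range m, (1 - (m : ℂ) - x + i) = -1 * (x + ((m - 1 - i : ℕ) : ℂ)) := by
    intro i hi
    have hi' : i < m := Finset.mem_range.mp hi
    have h1 : ((m - 1 - i : ℕ) : ℂ) = (m : ℂ) - 1 - i := by
      have : (m - 1 - i : ℕ) = m - (1 + i) := by omega
      rw [this, Nat.cast_sub (by omega)]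
      push_cast; ring
    rw [h1]; ring
  rw [Finset.prod_congr rfl key, Finset.prod_mul_distrib, Finset.prod_const,
    Finset.card_range, Finset.prod_range_reflect (fun i => x + (i : ℂ)) m]

lemma poch_neg_nat (n : ℕ) : ∀ k : ℕ, k ≤ n →
    poch (-(n : ℂ)) k = (-1) ^ k * ((n.choose k : ℂ) * (k.factorial : ℂ))
  | 0, _ => by simp [poch]
  | k + 1, h => by
    rw [poch_succ, poch_neg_nat n k (by omega)]
    have key : (n.choose (k + 1) : ℂ) * ((k : ℂ) + 1) = (n.choose k : ℂ) * ((n : ℂ) - k) := by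
      have h2 := Nat.choose_succ_right_eq n k
      have h3 : ((n.choose (k + 1) * (k + 1) : ℕ) : ℂ) = ((n.choose k * (n - k) : ℕ) : ℂ) := by
        rw [h2]
      push_cast [Nat.cast_sub (by omega : k ≤ n)] at h3
      exact h3
    have hf : ((k + 1).factorial : ℂ) = ((k : ℂ) + 1) * (k.factorial : ℂ) := by
      push_cast [Nat.factorial_succ]; ring
    rw [hf]
    linear_combination ((-1 : ℂ) ^ k * (k.factorial : ℂ)) * key

lemma poch_vandermonde (x y : ℂ) : ∀ n : ℕ, poch (x + y) n
    = ∑ k ∈ Finset.range (n + 1), (n.choose k : ℂ) * (poch x k * poch y (n - k))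
  | 0 => by simp [poch]
  | n + 1 => by
    have A : ℕ → ℂ := fun k => (n.choose k : ℂ) * (poch x (k + 1) * poch y (n - k))
    have B : ℕ → ℂ := fun k => (n.choose k : ℂ) * (poch x k * poch y (n + 1 - k))
    have lhs_eq : poch (x + y) (n + 1)
        = (∑ k ∈ Finset.range (n + 1), (n.choose k : ℂ) * (poch x (k + 1) * poch y (n - k)))
          + ∑ k ∈ Finset.range (n + 1), (n.choose k : ℂ) * (poch x k * poch y (n + 1 - k)) := by
      rw [poch_succ, poch_vandermonde x y n, Finset.sum_mul, ← Finset.sum_add_distrib]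
      refine Finset.sum_congr rfl fun k hk => ?_
      have hk' : k ≤ n := Nat.lt_succ_iff.mp (Finset.mem_range.mp hk)
      have h1 : n + 1 - k = (n - k) + 1 := by omega
      have h2 : ((n - k : ℕ) : ℂ) = (n : ℂ) - k := by
        rw [Nat.cast_sub hk']
      rw [h1, poch_succ, poch_succ, h2]
      ring
    rw [lhs_eq]
    rw [Finset.sum_range_succ' (fun k => ((n+1).choose k : ℂ) * (poch x k * poch y (n + 1 - k))) (n+1)]
    have hsplit : ∀ i ∈ Finset.range (n + 1),
        (((n+1).choose (i+1) : ℂ)) * (poch x (i+1) * poch y (n + 1 - (i+1)))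
        = (n.choose i : ℂ) * (poch x (i+1) * poch y (n - i))
          + (n.choose (i+1) : ℂ) * (poch x (i+1) * poch y (n - i)) := by
      intro i hi
      have : (n+1).choose (i+1) = n.choose i + n.choose (i+1) := Nat.choose_succ_succ n i
      rw [this]
      have : n + 1 - (i + 1) = n - i := by omega
      rw [this]
      push_cast
      ring
    rw [Finset.sum_congr rfl hsplit, Finset.sum_add_distrib]
    have hB : ∑ k ∈ Finset.range (n + 1), (n.choose k : ℂ) * (poch x k * poch y (n + 1 - k))
        = (∑ i ∈ Finset.range (n + 1), (n.choose (i+1) : ℂ) * (poch x (i+1) * poch y (n - i)))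
          + ((n+1).choose 0 : ℂ) * (poch x 0 * poch y (n + 1 - 0)) := by
      rw [Finset.sum_range_succ' (fun k => (n.choose k : ℂ) * (poch x k * poch y (n + 1 - k))) n]
      rw [Finset.sum_range_succ (fun i => (n.choose (i+1) : ℂ) * (poch x (i+1) * poch y (n - i))) n]
      simp only [Nat.choose_succ_self, Nat.cast_zero, zero_mul, add_zero, Nat.choose_zero_right,
        Nat.cast_one]
      refine congrArg₂ _ (Finset.sum_congr rfl fun i hi => ?_) rfl
      have : n + 1 - (i + 1) = n - i := by omega
      rw [this]
    rw [hB]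
    ring

lemma sum_triangle {M : Type*} [AddCommMonoid M] (n : ℕ) (f : ℕ → ℕ → M) :
    (∑ k ∈ Finset.range (n + 1), ∑ j ∈ Finset.range (n + 1 - k), f k j)
      = ∑ i ∈ Finset.range (n + 1), ∑ k ∈ Finset.range (i + 1), f k (i - k) := by
  rw [Finset.sum_sigma', Finset.sum_sigma']
  refine Finset.sum_nbij' (fun p => ⟨p.1 + p.2, p.1⟩) (fun p => ⟨p.2, p.1 - p.2⟩) ?_ ?_ ?_ ?_ ?_
  · rintro ⟨k, j⟩ h
    simp only [Finset.mem_sigma, Finset.mem_range] at *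
    omega
  · rintro ⟨i, k⟩ h
    simp only [Finset.mem_sigma, Finset.mem_range] at *
    omega
  · rintro ⟨k, j⟩ h
    simp
  · rintro ⟨i, k⟩ h
    simp only [Finset.mem_sigma, Finset.mem_range] at h
    have : k + (i - k) = i := by omega
    simp [this]
  · rintro ⟨k, j⟩ h
    simp

lemma saalschutz (n : ℕ) (a b c : ℂ) :
    (∑ k ∈ Finset.range (n + 1), (n.choose k : ℂ) *
        (poch a k * poch b k * (poch (c - a - b) (n - k) * poch (c + k) (n - k))))
      = poch (c - a) n * poch (c - b) n := by
  have step1 : ∀ k ∈ Finset.range (n + 1),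
      (n.choose k : ℂ) * (poch a k * poch b k * (poch (c - a - b) (n - k) * poch (c + k) (n - k)))
      = ∑ j ∈ Finset.range (n + 1 - k),
          ((n.choose k : ℂ) * (((n - k).choose j : ℂ) *
            (poch a k * poch b (k + j) * poch (c - a - b) (n - k) * poch (c - b) (n - k - j)))) := by
    intro k hk
    have hk' : k ≤ n := Nat.lt_succ_iff.mp (Finset.mem_range.mp hk)
    have hc : c + (k : ℂ) = (b + (k : ℂ)) + (c - b) := by ring
    have hr : n + 1 - k = (n - k) + 1 := by omega
    rw [hc, poch_vandermonde, hr]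
    simp only [Finset.mul_sum]
    refine Finset.sum_congr rfl fun j hj => ?_
    rw [poch_add b k j]
    ring
  rw [Finset.sum_congr rfl step1]
  rw [sum_triangle (M := ℂ) n (fun k j => (n.choose k : ℂ) * (((n - k).choose j : ℂ) *
        (poch a k * poch b (k + j) * poch (c - a - b) (n - k) * poch (c - b) (n - k - j))))]
  have step2 : ∀ i ∈ Finset.range (n + 1),
      (∑ k ∈ Finset.range (i + 1), (n.choose k : ℂ) * (((n - k).choose (i - k) : ℂ) *
        (poch a k * poch b (k + (i - k)) * poch (c - a - b) (n - k) * poch (c - b) (n - k - (i - k)))))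
      = (n.choose i : ℂ) * (poch b i * poch (c - a - b) (n - i)) * poch (c - b) n := by
    intro i hi
    have hi' : i ≤ n := Nat.lt_succ_iff.mp (Finset.mem_range.mp hi)
    have inner : ∀ k ∈ Finset.range (i + 1),
        (n.choose k : ℂ) * (((n - k).choose (i - k) : ℂ) *
          (poch a k * poch b (k + (i - k)) * poch (c - a - b) (n - k) * poch (c - b) (n - k - (i - k))))
        = ((n.choose i : ℂ) * (poch b i * poch (c - a - b) (n - i)) * poch (c - b) (n - i)) *
            ((i.choose k : ℂ) * (poch a k * poch (c - a - b + ((n - i : ℕ) : ℂ)) (i - k))) := by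
      intro k hkk
      have hk' : k ≤ i := Nat.lt_succ_iff.mp (Finset.mem_range.mp hkk)
      have e1 : k + (i - k) = i := by omega
      have e2 : n - k - (i - k) = n - i := by omega
      have e3 : n - k = (n - i) + (i - k) := by omega
      have hch : ((n.choose i * i.choose k : ℕ) : ℂ) = ((n.choose k * (n - k).choose (i - k) : ℕ) : ℂ) := by
        rw [Nat.choose_mul hk']
      push_cast at hch
      have h4 : poch (c - a - b) (n - k)
          = poch (c - a - b) (n - i) * poch (c - a - b + ((n - i : ℕ) : ℂ)) (i - k) := by
        rw [← poch_add, show (n - i) + (i - k) = n - k by omega]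
      rw [e1, e2, h4]
      linear_combination (-(poch a k * poch (c - a - b + ((n - i : ℕ) : ℂ)) (i - k) *
        poch b i * poch (c - a - b) (n - i) * poch (c - b) (n - i))) * hch
    rw [Finset.sum_congr rfl inner, ← Finset.mul_sum]
    have hv : (∑ k ∈ Finset.range (i + 1), (i.choose k : ℂ) *
        (poch a k * poch (c - a - b + ((n - i : ℕ) : ℂ)) (i - k)))
        = poch (c - b + ((n - i : ℕ) : ℂ)) i := by
      rw [← poch_vandermonde]
      congr 1
      ring
    rw [hv]
    have hp : poch (c - b) (n - i) * poch (c - b + ((n - i : ℕ) : ℂ)) i = poch (c - b) n := by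
      rw [← poch_add]
      congr 1
      omega
    calc (n.choose i : ℂ) * (poch b i * poch (c - a - b) (n - i)) * poch (c - b) (n - i) *
          poch (c - b + ((n - i : ℕ) : ℂ)) i
        = (n.choose i : ℂ) * (poch b i * poch (c - a - b) (n - i)) *
            (poch (c - b) (n - i) * poch (c - b + ((n - i : ℕ) : ℂ)) i) := by ring
      _ = _ := by rw [hp]
  rw [Finset.sum_congr rfl step2, ← Finset.sum_mul]
  have hv2 : (∑ i ∈ Finset.range (n + 1), (n.choose i : ℂ) * (poch b i * poch (c - a - b) (n - i)))
      = poch (c - a) n := by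
    rw [← poch_vandermonde]
    congr 1
    ring
  rw [hv2]


theorem wilson_factorization_case1 (n : ℕ) (t1 t2 t3 z : ℂ)
    (h12 : ∀ k : ℕ, k < n → t1 + t2 + k ≠ 0)
    (h13 : ∀ k : ℕ, k < n → t1 + t3 + k ≠ 0)
    (h14 : ∀ k : ℕ, k < n → t1 + (1 - (n : ℂ) - t3) + k ≠ 0) :
    (-1 : ℂ) ^ n * wilson n z t1 t2 t3 (1 - (n : ℂ) - t3)
        = poch (t1 + t2) n * (poch (t3 + z) n * poch (t3 - z) n) ∧
    poch (t1 + t2) n * (poch (t3 + z) n * poch (t3 - z) n)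
        = poch (t1 + t2) n * ∏ k ∈ Finset.range n, ((t3 + k) ^ 2 - z ^ 2) := by
  constructor
  · -- nonvanishing of the denominator Pochhammers
    have hP12 : ∀ k : ℕ, k ≤ n → poch (t1 + t2) k ≠ 0 := fun k hk =>
      poch_ne_zero fun j hj => h12 j (by omega)
    have hPC : ∀ k : ℕ, k ≤ n → poch (t1 + t3) k ≠ 0 := fun k hk =>
      poch_ne_zero fun j hj => h13 j (by omega)
    have hPD : ∀ k : ℕ, k ≤ n → poch (t1 + (1 - (n : ℂ) - t3)) k ≠ 0 := fun k hk =>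
      poch_ne_zero fun j hj => h14 j (by omega)
    -- the key sum evaluation
    have hterm : ∀ k ∈ Finset.range (n + 1),
        poch (t1 + t3) n * (poch (t1 + (1 - (n : ℂ) - t3)) n *
          ((poch (-(n : ℂ)) k * poch (t1 + t2) k * poch (t1 + z) k * poch (t1 - z) k) /
            ((k.factorial : ℂ) * poch (t1 + t2) k * poch (t1 + t3) k *
              poch (t1 + (1 - (n : ℂ) - t3)) k)))
        = (-1 : ℂ) ^ n * ((n.choose k : ℂ) *
            (poch (t1 + z) k * poch (t1 - z) k *
              (poch (t1 + t3 - (t1 + z) - (t1 - z)) (n - k) *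
                poch (t1 + t3 + (k : ℂ)) (n - k)))) := by
      intro k hk
      have hk' : k ≤ n := Nat.lt_succ_iff.mp (Finset.mem_range.mp hk)
      have hC : poch (t1 + t3) n = poch (t1 + t3) k * poch (t1 + t3 + (k : ℂ)) (n - k) := by
        rw [← poch_add, show k + (n - k) = n by omega]
      have hD : poch (t1 + (1 - (n : ℂ) - t3)) n
          = poch (t1 + (1 - (n : ℂ) - t3)) k *
              poch (t1 + (1 - (n : ℂ) - t3) + (k : ℂ)) (n - k) := by
        rw [← poch_add, show k + (n - k) = n by omega]
      have hcast : ((n - k : ℕ) : ℂ) = (n : ℂ) - k := Nat.cast_sub hk'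
      have hrefl : poch (t1 + (1 - (n : ℂ) - t3) + (k : ℂ)) (n - k)
          = (-1 : ℂ) ^ (n - k) * poch (t3 - t1) (n - k) := by
        have harg : t1 + (1 - (n : ℂ) - t3) + (k : ℂ)
            = 1 - ((n - k : ℕ) : ℂ) - (t3 - t1) := by rw [hcast]; ring
        rw [harg, poch_reflect]
      have h2 : ((-1 : ℂ)) ^ k * (-1 : ℂ) ^ k = 1 := by
        rw [← mul_pow]; norm_num
      have hsign : ((-1 : ℂ)) ^ (n - k) = (-1 : ℂ) ^ n * (-1 : ℂ) ^ k := by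
        have h1 : ((-1 : ℂ)) ^ (n - k) = (-1 : ℂ) ^ (n - k) * ((-1 : ℂ) ^ k * (-1 : ℂ) ^ k) := by
          rw [h2, mul_one]
        rw [h1, ← mul_assoc, ← pow_add, show n - k + k = n by omega]
      have hneg := poch_neg_nat n k hk'
      have harg2 : t1 + t3 - (t1 + z) - (t1 - z) = t3 - t1 := by ring
      rw [harg2, hC, hD, hrefl, hsign, hneg]
      have hf : (k.factorial : ℂ) ≠ 0 := Nat.cast_ne_zero.mpr (Nat.factorial_ne_zero k)
      have e12 := hP12 k hk'
      have eC := hPC k hk'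
      have eD := hPD k hk'
      field_simp
      ring_nf
      simp only [show ((-1 : ℂ)) ^ (k * 2) = 1 from by rw [mul_comm, pow_mul]; norm_num, mul_one]
    have hsum : poch (t1 + t3) n * (poch (t1 + (1 - (n : ℂ) - t3)) n *
        ∑ k ∈ Finset.range (n + 1),
          (poch (-(n : ℂ)) k * poch (t1 + t2) k * poch (t1 + z) k * poch (t1 - z) k) /
            ((k.factorial : ℂ) * poch (t1 + t2) k * poch (t1 + t3) k *
              poch (t1 + (1 - (n : ℂ) - t3)) k))
        = (-1 : ℂ) ^ n * (poch (t1 + t3 - (t1 + z)) n * poch (t1 + t3 - (t1 - z)) n) := by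
      simp only [Finset.mul_sum]
      rw [Finset.sum_congr rfl hterm, ← Finset.mul_sum, ← saalschutz n (t1 + z) (t1 - z) (t1 + t3)]
    unfold wilson
    rw [show t1 + t2 + t3 + (1 - (n : ℂ) - t3) + (n : ℂ) - 1 = t1 + t2 from by ring]
    calc (-1 : ℂ) ^ n * (poch (t1 + t2) n * poch (t1 + t3) n * poch (t1 + (1 - (n : ℂ) - t3)) n *
          ∑ k ∈ Finset.range (n + 1),
            poch (-(n : ℂ)) k * poch (t1 + t2) k * poch (t1 + z) k * poch (t1 - z) k /
              ((k.factorial : ℂ) * poch (t1 + t2) k * poch (t1 + t3) k *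
                poch (t1 + (1 - (n : ℂ) - t3)) k))
        = (-1 : ℂ) ^ n * (poch (t1 + t2) n * (poch (t1 + t3) n *
            (poch (t1 + (1 - (n : ℂ) - t3)) n *
              ∑ k ∈ Finset.range (n + 1),
                poch (-(n : ℂ)) k * poch (t1 + t2) k * poch (t1 + z) k * poch (t1 - z) k /
                  ((k.factorial : ℂ) * poch (t1 + t2) k * poch (t1 + t3) k *
                    poch (t1 + (1 - (n : ℂ) - t3)) k)))) := by ring
      _ = (-1 : ℂ) ^ n * (poch (t1 + t2) n *
            ((-1 : ℂ) ^ n * (poch (t1 + t3 - (t1 + z)) n * poch (t1 + t3 - (t1 - z)) n))) := by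
          rw [hsum]
      _ = poch (t1 + t2) n * (poch (t3 + z) n * poch (t3 - z) n) := by
          rw [show t1 + t3 - (t1 + z) = t3 - z from by ring,
            show t1 + t3 - (t1 - z) = t3 + z from by ring]
          have h1 : ((-1 : ℂ)) ^ n * (-1 : ℂ) ^ n = 1 := by rw [← mul_pow]; norm_num
          linear_combination (poch (t1 + t2) n * (poch (t3 - z) n * poch (t3 + z) n)) * h1
  · congr 1
    unfold poch
    rw [← Finset.prod_mul_distrib]
    exact Finset.prod_congr rfl fun k _ => by ring
end

section
/- (q-analogue of the Pfaff–Saalschütz theorem.) Let n ∈ ℕ and q, A, B, C ∈ ℂ with q ≠ 0, A ≠ 0, B ≠ 0, C ≠ 0. Assume (q;q)_k ≠ 0, (C;q)_k ≠ 0, and (q^{1−n}AB/C;q)_k ≠ 0 for all k ≤ n, and (C/(AB);q)_n ≠ 0. Then Σ_{k=0}^{n} [(q^{−n};q)_k (A;q)_k (B;q)_k] / [(q;q)_k (C;q)_k (q^{1−n}AB/C;q)_k] · q^k = [(C/A;q)_n (C/B;q)_n] / [(C;q)_n (C/(AB);q)_n]. -/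
open Finset

/-- q-shifted factorial `(a;q)_k = ∏_{j=0}^{k-1} (1 - a q^j)`. -/
noncomputable def qpoch (a q : ℂ) (k : ℕ) : ℂ := ∏ i ∈ Finset.range k, (1 - a * q ^ i)

noncomputable def gbf (q : ℂ) (n j : ℕ) : ℂ :=
  qpoch q q n / (qpoch q q j * qpoch q q (n - j))

noncomputable def Yf (q A B d : ℂ) (n k : ℕ) : ℂ :=
  qpoch A q k * qpoch B q k * qpoch d q (n - k) * qpoch (A * B * d * q ^ k) q (n - k) * d ^ k

noncomputable def Sf (q A B d : ℂ) (n k : ℕ) : ℂ := gbf q n k * Yf q A B d n k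

noncomputable def ff (q A B d : ℂ) (n j : ℕ) : ℂ :=
  -(qpoch q q n * (1 - q ^ j) * (1 - q ^ (n + 1 - j)) /
      (qpoch q q j * qpoch q q (n + 1 - j))) *
    qpoch A q j * qpoch B q j * qpoch (d * q) q (n - j) *
    qpoch (A * B * d * q ^ j) q (n - j) * d ^ j * (1 - A * B * d * q ^ n)

section dag
variable (q A B d : ℂ)

lemma qpoch_zero (a q : ℂ) : qpoch a q 0 = 1 := by simp [qpoch]

lemma qpoch_one (a q : ℂ) : qpoch a q 1 = 1 - a := by simp [qpoch]

lemma qpoch_succ (a q : ℂ) (k : ℕ) :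
    qpoch a q (k + 1) = qpoch a q k * (1 - a * q ^ k) :=
  Finset.prod_range_succ _ k

lemma qpoch_succ' (a q : ℂ) (k : ℕ) :
    qpoch a q (k + 1) = (1 - a) * qpoch (a * q) q k := by
  unfold qpoch
  rw [Finset.prod_range_succ', pow_zero, mul_one, mul_comm]
  congr 1
  exact Finset.prod_congr rfl (fun i _ => by ring)

lemma qpoch_factor_ne_zero {a q : ℂ} {n : ℕ} (h : qpoch a q n ≠ 0) :
    ∀ i, i < n → 1 - a * q ^ i ≠ 0 := by
  unfold qpoch at h
  rw [Finset.prod_ne_zero_iff] at h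
  intro i hi
  exact h i (Finset.mem_range.mpr hi)

lemma one_sub_qq_ne (q : ℂ) {i N : ℕ} (hq1 : ∀ t : ℕ, 1 ≤ t → t ≤ N → q ^ t ≠ 1)
    (h : i + 1 ≤ N) : 1 - q * q ^ i ≠ 0 := by
  have hh := hq1 (i + 1) (by omega) h
  intro hc
  apply hh
  rw [pow_succ']
  linear_combination -hc

lemma qpoch_q_ne_zero (q : ℂ) {N : ℕ} (hq1 : ∀ t : ℕ, 1 ≤ t → t ≤ N → q ^ t ≠ 1) :
    ∀ k, k ≤ N → qpoch q q k ≠ 0 := by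
  intro k hk
  unfold qpoch
  rw [Finset.prod_ne_zero_iff]
  intro i hi
  rw [Finset.mem_range] at hi
  exact one_sub_qq_ne q hq1 (by omega)

lemma E_aux (n : ℕ) (q C d w e : ℂ)
    (hw : w * q ^ n = 1) (he : e * d = q * w)
    (hdq : ∀ i, i < n → 1 - d * q ^ i ≠ 0)
    (hq1 : ∀ t : ℕ, 1 ≤ t → t ≤ n → q ^ t ≠ 1) :
    ∀ k, k ≤ n →
      qpoch w q k * q ^ k * qpoch q q (n - k) * qpoch C q n * qpoch d q n
        = qpoch q q n * qpoch d q (n - k) * qpoch (C * q ^ k) q (n - k) * d ^ k *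
            qpoch C q k * qpoch e q k := by
  intro k
  induction k with
  | zero =>
    intro _
    simp only [Nat.sub_zero, pow_zero, qpoch_zero, mul_one, one_mul]
    ring
  | succ k ihk =>
    intro hk1
    have hk : k ≤ n := by omega
    have IHk := ihk hk
    obtain ⟨m, hm⟩ : ∃ m, n - k = m + 1 := ⟨n - k - 1, by omega⟩
    have hm2 : n - (k + 1) = m := by omega
    rw [hm] at IHk
    rw [hm2]
    have hqn : q ^ n = q ^ k * q ^ m * q := by
      rw [show n = k + m + 1 from by omega]; ring
    rw [hqn] at hw
    have hfac : (1 - w * q ^ k) * q * (1 - d * q ^ m) = (1 - e * q ^ k) * d * (1 - q * q ^ m) := by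
      linear_combination (d - q) * hw + (q ^ k - q ^ k * q ^ m * q) * he
    have hpi : (1 - q * q ^ m) * (1 - d * q ^ m) ≠ 0 := by
      apply mul_ne_zero
      · exact one_sub_qq_ne q hq1 (by omega)
      · exact hdq m (by omega)
    apply mul_right_cancel₀ hpi
    calc qpoch w q (k + 1) * q ^ (k + 1) * qpoch q q m * qpoch C q n * qpoch d q n *
          ((1 - q * q ^ m) * (1 - d * q ^ m))
        = (qpoch w q k * q ^ k * qpoch q q (m + 1) * qpoch C q n * qpoch d q n) *
            ((1 - w * q ^ k) * q * (1 - d * q ^ m)) := by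
          rw [qpoch_succ w q k, qpoch_succ q q m]; ring
      _ = (qpoch q q n * qpoch d q (m + 1) * qpoch (C * q ^ k) q (m + 1) * d ^ k *
            qpoch C q k * qpoch e q k) * ((1 - e * q ^ k) * d * (1 - q * q ^ m)) := by
          rw [IHk, hfac]
      _ = qpoch q q n * qpoch d q m * qpoch (C * q ^ (k + 1)) q m * d ^ (k + 1) *
            qpoch C q (k + 1) * qpoch e q (k + 1) * ((1 - q * q ^ m) * (1 - d * q ^ m)) := by
          rw [qpoch_succ d q m, qpoch_succ' (C * q ^ k) q m,
            show C * q ^ k * q = C * q ^ (k + 1) from by ring,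
            qpoch_succ C q k, qpoch_succ e q k]
          ring

set_option maxHeartbeats 1600000 in
lemma dagger (n j : ℕ) (hj : j ≤ n) (q A B d : ℂ)
    (hq1 : ∀ t : ℕ, 1 ≤ t → t ≤ n + 1 → q ^ t ≠ 1) :
    q ^ (n - j) * gbf q n j * Yf q A B d (n + 1) (j + 1) + gbf q n j * Yf q A B d (n + 1) j
      = (1 - A * d) * (1 - B * d) * Sf q A B (d * q) n j +
          (ff q A B d n (j + 1) - ff q A B d n j) := by
  have hne : ∀ k, k ≤ n + 1 → qpoch q q k ≠ 0 := qpoch_q_ne_zero q hq1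
  rcases Nat.lt_or_ge j n with hlt | hge
  · -- j < n
    obtain ⟨m, rfl⟩ : ∃ m, n = j + m + 1 := ⟨n - j - 1, by omega⟩
    simp only [Sf, gbf, Yf, ff]
    simp only [show j + m + 1 - j = m + 1 from by omega,
      show j + m + 1 + 1 - (j + 1) = m + 1 from by omega,
      show j + m + 1 - (j + 1) = m from by omega,
      show j + m + 1 + 1 - j = m + 2 from by omega
]
    have hu := hne j (by omega)
    have hv := hne m (by omega)
    have h1 : (1 : ℂ) - q * q ^ m ≠ 0 := one_sub_qq_ne q hq1 (by omega)
    have h2 : (1 : ℂ) - q * q ^ (m + 1) ≠ 0 := one_sub_qq_ne q hq1 (by omega)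
    have h3 : (1 : ℂ) - q * q ^ j ≠ 0 := one_sub_qq_ne q hq1 (by omega)
    have e1 : qpoch q q (j + m + 1) / (qpoch q q j * qpoch q q (m + 1))
        = qpoch q q (j + m + 1) /
            (qpoch q q j * qpoch q q m *
              ((1 - q * q ^ j) * (1 - q * q ^ m) * (1 - q * q ^ (m + 1)))) *
            ((1 - q * q ^ j) * (1 - q * q ^ (m + 1))) := by
      rw [qpoch_succ q q m]
      field_simp
    have e2 : qpoch q q (j + m + 1) * (1 - q ^ j) * (1 - q ^ (m + 2)) /
          (qpoch q q j * qpoch q q (m + 2))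
        = qpoch q q (j + m + 1) /
            (qpoch q q j * qpoch q q m *
              ((1 - q * q ^ j) * (1 - q * q ^ m) * (1 - q * q ^ (m + 1)))) *
            ((1 - q ^ j) * (1 - q ^ (m + 2)) * (1 - q * q ^ j)) := by
      rw [show (m + 2 : ℕ) = (m + 1) + 1 from rfl, qpoch_succ q q (m + 1), qpoch_succ q q m]
      rw [div_mul_eq_mul_div, div_eq_div_iff (by apply_rules only [mul_ne_zero, hu, hv, h1, h2, h3])
        (by apply_rules only [mul_ne_zero, hu, hv, h1, h2, h3])]
      ring
    have e3 : qpoch q q (j + m + 1) * (1 - q ^ (j + 1)) * (1 - q ^ (m + 1)) /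
          (qpoch q q (j + 1) * qpoch q q (m + 1))
        = qpoch q q (j + m + 1) /
            (qpoch q q j * qpoch q q m *
              ((1 - q * q ^ j) * (1 - q * q ^ m) * (1 - q * q ^ (m + 1)))) *
            ((1 - q ^ (j + 1)) * (1 - q ^ (m + 1)) * (1 - q * q ^ (m + 1))) := by
      rw [qpoch_succ q q m, qpoch_succ q q j]
      rw [div_mul_eq_mul_div, div_eq_div_iff (by apply_rules only [mul_ne_zero, hu, hv, h1, h2, h3])
        (by apply_rules only [mul_ne_zero, hu, hv, h1, h2, h3])]
      ring
    rw [e1, e2, e3,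
      qpoch_succ A q j, qpoch_succ B q j,
      show (m + 2 : ℕ) = (m + 1) + 1 from rfl,
      qpoch_succ' d q (m + 1),
      qpoch_succ' d q m,
      qpoch_succ (d * q) q m,
      qpoch_succ' (A * B * d * q ^ j) q (m + 1),
      qpoch_succ' (A * B * d * q ^ j) q m,
      show A * B * d * q ^ j * q = A * B * d * q ^ (j + 1) from by ring,
      show A * B * (d * q) * q ^ j = A * B * d * q ^ (j + 1) from by ring,
      qpoch_succ (A * B * d * q ^ (j + 1)) q m,
      mul_pow d q j]
    ring
  · -- j = n
    have : j = n := by omega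
    subst this
    simp only [Sf, gbf, Yf, ff]
    simp only [Nat.sub_self, show j + 1 - j = 1 from by omega,
      show j + 1 - (j + 1) = 0 from by omega, show j - (j + 1) = 0 from by omega]
    have hu := hne j (by omega)
    have h1 : (1 : ℂ) - q ≠ 0 := by
      have := one_sub_qq_ne q hq1 (show 0 + 1 ≤ j + 1 by omega)
      simpa using this
    rw [qpoch_succ A q j, qpoch_succ B q j, qpoch_succ q q j]
    simp only [qpoch_zero, qpoch_one, pow_zero, mul_one, sub_self, zero_mul, mul_zero,
      neg_zero, zero_div]
    field_simp [hu, h1]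
    ring

lemma ff_zero (q A B d : ℂ) (n : ℕ) : ff q A B d n 0 = 0 := by
  simp [ff]

lemma ff_top (q A B d : ℂ) (n : ℕ) : ff q A B d n (n + 1) = 0 := by
  simp [ff, Nat.sub_self]

lemma pascal (q : ℂ) (n j : ℕ) (hj : j < n)
    (hq1 : ∀ t : ℕ, 1 ≤ t → t ≤ n + 1 → q ^ t ≠ 1) :
    gbf q (n + 1) (j + 1) = q ^ (n - j) * gbf q n j + gbf q n (j + 1) := by
  have hne : ∀ k, k ≤ n + 1 → qpoch q q k ≠ 0 := qpoch_q_ne_zero q hq1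
  obtain ⟨m, rfl⟩ : ∃ m, n = j + m + 1 := ⟨n - j - 1, by omega⟩
  simp only [gbf]
  simp only [show j + m + 1 + 1 - (j + 1) = m + 1 from by omega,
    show j + m + 1 - j = m + 1 from by omega,
    show j + m + 1 - (j + 1) = m from by omega]
  have hu := hne j (by omega)
  have hv := hne m (by omega)
  have hP := hne (j + m + 1) (by omega)
  have h1 : (1 : ℂ) - q * q ^ m ≠ 0 := one_sub_qq_ne q hq1 (by omega)
  have h3 : (1 : ℂ) - q * q ^ j ≠ 0 := one_sub_qq_ne q hq1 (by omega)
  rw [show (j + m + 1 + 1 : ℕ) = (j + m + 1) + 1 from rfl, qpoch_succ q q (j + m + 1),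
    qpoch_succ q q m, qpoch_succ q q j]
  field_simp
  ring

lemma gbf_zero_left (q : ℂ) (n : ℕ) (hP : qpoch q q n ≠ 0) : gbf q n 0 = 1 := by
  simp [gbf, qpoch_zero, hP]

lemma gbf_diag (q : ℂ) (n : ℕ) (hP : qpoch q q n ≠ 0) : gbf q n n = 1 := by
  simp [gbf, qpoch_zero, Nat.sub_self, hP]

lemma star : ∀ (n : ℕ) (q A B : ℂ),
    (∀ t : ℕ, 1 ≤ t → t ≤ n → q ^ t ≠ 1) → ∀ d : ℂ,
    ∑ k ∈ Finset.range (n + 1), Sf q A B d n k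
      = qpoch (A * d) q n * qpoch (B * d) q n := by
  intro n
  induction n with
  | zero =>
    intro q A B hq1 d
    norm_num [Sf, gbf, Yf, qpoch_zero]
  | succ n ih =>
    intro q A B hq1 d
    have hq1' : ∀ t : ℕ, 1 ≤ t → t ≤ n → q ^ t ≠ 1 := fun t h1 h2 => hq1 t h1 (by omega)
    have hne : ∀ k, k ≤ n + 1 → qpoch q q k ≠ 0 := qpoch_q_ne_zero q hq1
    have h2 : Sf q A B d (n + 1) 0 = gbf q n 0 * Yf q A B d (n + 1) 0 := by
      rw [Sf, gbf_zero_left q (n + 1) (hne (n + 1) le_rfl), gbf_zero_left q n (hne n (by omega))]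
    have h3 : Sf q A B d (n + 1) (n + 1)
        = q ^ (n - n) * gbf q n n * Yf q A B d (n + 1) (n + 1) := by
      rw [Sf, gbf_diag q (n + 1) (hne (n + 1) le_rfl), gbf_diag q n (hne n (by omega)),
        Nat.sub_self, pow_zero]
      ring
    have h1 : ∀ i ∈ Finset.range n, Sf q A B d (n + 1) (i + 1)
        = q ^ (n - i) * gbf q n i * Yf q A B d (n + 1) (i + 1)
            + gbf q n (i + 1) * Yf q A B d (n + 1) (i + 1) := by
      intro i hi
      rw [Finset.mem_range] at hi
      rw [Sf, pascal q n i hi hq1]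
      ring
    have key : ∀ j ∈ Finset.range (n + 1),
        q ^ (n - j) * gbf q n j * Yf q A B d (n + 1) (j + 1) + gbf q n j * Yf q A B d (n + 1) j
          = (1 - A * d) * (1 - B * d) * Sf q A B (d * q) n j +
              (ff q A B d n (j + 1) - ff q A B d n j) := by
      intro j hj
      rw [Finset.mem_range] at hj
      exact dagger n j (by omega) q A B d hq1
    calc ∑ k ∈ Finset.range (n + 1 + 1), Sf q A B d (n + 1) k
        = (∑ i ∈ Finset.range n, Sf q A B d (n + 1) (i + 1) + Sf q A B d (n + 1) 0)
            + Sf q A B d (n + 1) (n + 1) := by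
          rw [Finset.sum_range_succ, Finset.sum_range_succ']
      _ = (∑ i ∈ Finset.range n, (q ^ (n - i) * gbf q n i * Yf q A B d (n + 1) (i + 1)
              + gbf q n (i + 1) * Yf q A B d (n + 1) (i + 1))
            + gbf q n 0 * Yf q A B d (n + 1) 0)
            + q ^ (n - n) * gbf q n n * Yf q A B d (n + 1) (n + 1) := by
          rw [Finset.sum_congr rfl h1, h2, h3]
      _ = ∑ j ∈ Finset.range (n + 1),
            (q ^ (n - j) * gbf q n j * Yf q A B d (n + 1) (j + 1)
              + gbf q n j * Yf q A B d (n + 1) j) := by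
          rw [Finset.sum_add_distrib, Finset.sum_add_distrib, Finset.sum_range_succ
            (fun j => q ^ (n - j) * gbf q n j * Yf q A B d (n + 1) (j + 1)),
            Finset.sum_range_succ' (fun j => gbf q n j * Yf q A B d (n + 1) j)]
          ring
      _ = ∑ j ∈ Finset.range (n + 1),
            ((1 - A * d) * (1 - B * d) * Sf q A B (d * q) n j +
              (ff q A B d n (j + 1) - ff q A B d n j)) := Finset.sum_congr rfl key
      _ = (1 - A * d) * (1 - B * d) * ∑ j ∈ Finset.range (n + 1), Sf q A B (d * q) n j
            + (ff q A B d n (n + 1) - ff q A B d n 0) := by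
          rw [Finset.sum_add_distrib, Finset.mul_sum, Finset.sum_range_sub (ff q A B d n)]
      _ = qpoch (A * d) q (n + 1) * qpoch (B * d) q (n + 1) := by
          rw [ih q A B hq1' (d * q), ff_top, ff_zero,
            qpoch_succ' (A * d) q n, qpoch_succ' (B * d) q n,
            show A * d * q = A * (d * q) from by ring,
            show B * d * q = B * (d * q) from by ring]
          ring

theorem q_pfaff_saalschuetz (n : ℕ) (q A B C : ℂ)
    (hq : q ≠ 0) (hA : A ≠ 0) (hB : B ≠ 0) (hC : C ≠ 0)
    (hqq : ∀ k : ℕ, k ≤ n → qpoch q q k ≠ 0)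
    (hCk : ∀ k : ℕ, k ≤ n → qpoch C q k ≠ 0)
    (hD : ∀ k : ℕ, k ≤ n → qpoch (q ^ (1 - (n : ℤ)) * A * B / C) q k ≠ 0)
    (hCAB : qpoch (C / (A * B)) q n ≠ 0) :
    ∑ k ∈ Finset.range (n + 1),
        (qpoch (q ^ (-(n : ℤ))) q k * qpoch A q k * qpoch B q k) /
          (qpoch q q k * qpoch C q k * qpoch (q ^ (1 - (n : ℤ)) * A * B / C) q k) * q ^ k
      = (qpoch (C / A) q n * qpoch (C / B) q n) /
          (qpoch C q n * qpoch (C / (A * B)) q n) := by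
  have hAB : A * B ≠ 0 := mul_ne_zero hA hB
  have hd : C / (A * B) ≠ 0 := div_ne_zero hC hAB
  have hq1 : ∀ t : ℕ, 1 ≤ t → t ≤ n → q ^ t ≠ 1 := by
    intro t h1 h2
    have hfac := qpoch_factor_ne_zero (hqq n le_rfl) (t - 1) (by omega)
    have hqt : q * q ^ (t - 1) = q ^ t := by
      rw [← pow_succ']
      congr 1
      omega
    rw [hqt] at hfac
    intro hcon
    exact hfac (by rw [hcon]; ring)
  have hdq : ∀ i, i < n → 1 - C / (A * B) * q ^ i ≠ 0 := qpoch_factor_ne_zero hCAB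
  have hw : q ^ (-(n : ℤ)) * q ^ n = 1 := by
    rw [← zpow_natCast q n, ← zpow_add₀ hq]
    simp
  have hzq : q ^ (1 - (n : ℤ)) = q * q ^ (-(n : ℤ)) := by
    rw [sub_eq_add_neg, zpow_add₀ hq, zpow_one]
  have he : q ^ (1 - (n : ℤ)) * A * B / C * (C / (A * B)) = q * q ^ (-(n : ℤ)) := by
    rw [hzq]
    field_simp
  have habd : A * B * (C / (A * B)) = C := by field_simp
  have hterm : ∀ k ∈ Finset.range (n + 1),
      (qpoch (q ^ (-(n : ℤ))) q k * qpoch A q k * qpoch B q k) /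
          (qpoch q q k * qpoch C q k * qpoch (q ^ (1 - (n : ℤ)) * A * B / C) q k) * q ^ k
        = Sf q A B (C / (A * B)) n k / (qpoch C q n * qpoch (C / (A * B)) q n) := by
    intro k hk
    rw [Finset.mem_range] at hk
    have hk' : k ≤ n := by omega
    have Ek := E_aux n q C (C / (A * B)) (q ^ (-(n : ℤ))) (q ^ (1 - (n : ℤ)) * A * B / C)
      hw he hdq hq1 k hk'
    simp only [Sf, gbf, Yf]
    rw [show A * B * (C / (A * B)) * q ^ k = C * q ^ k from by rw [habd]]
    rw [div_mul_eq_mul_div]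
    rw [div_mul_eq_mul_div, div_div]
    rw [div_eq_div_iff
      (mul_ne_zero (mul_ne_zero (hqq k hk') (hCk k hk')) (hD k hk'))
      (mul_ne_zero (mul_ne_zero (hqq k hk') (hqq (n - k) (by omega)))
        (mul_ne_zero (hCk n le_rfl) hCAB))]
    linear_combination (qpoch A q k * qpoch B q k * qpoch q q k) * Ek
  rw [Finset.sum_congr rfl hterm, ← Finset.sum_div,
    star n q A B hq1 (C / (A * B)),
    show A * (C / (A * B)) = C / B from by field_simp,
    show B * (C / (A * B)) = C / A from by field_simp]
  ring
end dag
end
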